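/- Let m, n be integers with n odd and gcd(4m+1, n) = 1, and let E be the elliptic curve over ℚ defined by y² + xy = x³ + m·x² + n·x (this is an elliptic curve since its discriminant n²·((4m+1)² − 64n) is odd, hence nonzero). Then the group E(ℚ) contains a point Q of order two with Q ≠ (0,0) if and only if there exists an odd integer d with gcd(4m+1, d) = 1 such that n = −d·(4m+1+16d). -/

import Mathlib

/-- The Weierstrass curve `y² + xy = x³ + m·x² + n·x` over `ℚ`, i.e. the Weierstrass curve
with coefficients `(a₁, a₂, a₃, a₄, a₆) = (1, m, 0, n, 0)`. -/
def Wmn (m n : ℤ) : WeierstrassCurve ℚ :=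
  { a₁ := 1, a₂ := (m : ℚ), a₃ := 0, a₄ := (n : ℚ), a₆ := 0 }

lemma nt_forward (m n : ℤ) (hn : Odd n) (hgcd : Int.gcd (4 * m + 1) n = 1) (x : ℚ)
    (hx : 4 * x ^ 2 + (4 * (m : ℚ) + 1) * x + 4 * (n : ℚ) = 0) :
    ∃ d : ℤ, Odd d ∧ Int.gcd (4 * m + 1) d = 1 ∧ n = -d * (4 * m + 1 + 16 * d) := by
  set q : ℚ := 8 * x + (4 * (m : ℚ) + 1) with hq
  have hq2 : q * q = (((4 * m + 1) ^ 2 - 64 * n : ℤ) : ℚ) := by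
    rw [hq]; push_cast; linear_combination (16 : ℚ) * hx
  have hden : q.den = 1 := by
    have h := Rat.mul_self_den q
    rw [hq2, Rat.den_intCast] at h
    exact Nat.eq_one_of_mul_eq_one_right h.symm
  obtain ⟨s, hs⟩ : ∃ s : ℤ, (s : ℚ) = q := ⟨q.num, (Rat.den_eq_one_iff q).mp hden⟩
  have hs2 : s ^ 2 = (4 * m + 1) ^ 2 - 64 * n := by
    have : (s : ℚ) ^ 2 = (((4 * m + 1) ^ 2 - 64 * n : ℤ) : ℚ) := by rw [hs, sq, hq2]
    exact_mod_cast this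
  have hsodd : Odd s := by
    have h1 : Odd (s ^ 2) := by
      rw [hs2]
      exact Odd.sub_even (Odd.pow ⟨2 * m, by ring⟩) ⟨32 * n, by ring⟩
    rcases Int.even_or_odd s with he | ho
    · exact absurd h1 (Int.not_odd_iff_even.mpr (Int.even_pow.mpr ⟨he, two_ne_zero⟩))
    · exact ho
  obtain ⟨b, hb⟩ := hsodd
  have huv : (2 * m - b) * (2 * m + b + 1) = 16 * n := by
    have h4 : (4 : ℤ) * ((2 * m - b) * (2 * m + b + 1)) = 4 * (16 * n) := by
      linear_combination -hs2 + (s + 2 * b + 1) * hb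
    exact mul_left_cancel₀ (by norm_num) h4
  have key : ∀ e v : ℤ, e * v = n → 16 * e + v = 4 * m + 1 →
      ∃ d : ℤ, Odd d ∧ Int.gcd (4 * m + 1) d = 1 ∧ n = -d * (4 * m + 1 + 16 * d) := by
    intro e v hev hsum
    refine ⟨-e, ((Int.odd_mul.mp (hev ▸ hn)).1).neg, ?_, ?_⟩
    · have hdn : (-e : ℤ) ∣ n := ⟨-v, by rw [← hev]; ring⟩
      have h1 : (Int.gcd (4 * m + 1) (-e) : ℤ) ∣ (Int.gcd (4 * m + 1) n : ℤ) :=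
        Int.dvd_coe_gcd (Int.gcd_dvd_left _ _) ((Int.gcd_dvd_right _ _).trans hdn)
      rw [hgcd] at h1
      have := Int.eq_one_of_dvd_one (Int.natCast_nonneg _) (by exact_mod_cast h1)
      exact_mod_cast this
    · have hv : v = 4 * m + 1 - 16 * e := by omega
      rw [← hev, hv]; ring
  rcases Int.even_or_odd b with hbe | hbo
  · have hvodd : ¬ (2 : ℤ) ∣ (2 * m + b + 1) := by rcases hbe with ⟨c, hc⟩; omega
    obtain ⟨e, he⟩ : (2 : ℤ) ^ 4 ∣ (2 * m - b) :=
      Int.prime_two.pow_dvd_of_dvd_mul_right 4 hvodd ⟨n, by linarith [huv]⟩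
    refine key e (2 * m + b + 1) ?_ (by omega)
    have h16 : (16 : ℤ) * (e * (2 * m + b + 1)) = 16 * n := by rw [← huv, he]; ring
    exact mul_left_cancel₀ (by norm_num) h16
  · have huodd : ¬ (2 : ℤ) ∣ (2 * m - b) := by rcases hbo with ⟨c, hc⟩; omega
    obtain ⟨e, he⟩ : (2 : ℤ) ^ 4 ∣ (2 * m + b + 1) :=
      Int.prime_two.pow_dvd_of_dvd_mul_right 4 huodd
        ⟨n, by linarith [huv, mul_comm (2 * m - b) (2 * m + b + 1)]⟩
    refine key e (2 * m - b) ?_ (by omega)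
    have h16 : (16 : ℤ) * (e * (2 * m - b)) = 16 * n := by rw [← huv, he]; ring
    exact mul_left_cancel₀ (by norm_num) h16

open WeierstrassCurve.Affine WeierstrassCurve.Affine.Point in
/-- Let `m, n` be integers with `n` odd and `gcd(4m+1, n) = 1`, and let `E` be the elliptic
curve over `ℚ` defined by `y² + xy = x³ + m·x² + n·x`.  Then the group `E(ℚ)` contains a point
`Q` of order two with `Q ≠ (0,0)` if and only if there exists an odd integer `d` with
`gcd(4m+1, d) = 1` such that `n = −d·(4m+1+16d)`. -/
theorem stmt_0 (m n : ℤ) (hn : Odd n) (hgcd : Int.gcd (4 * m + 1) n = 1) :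
    (∃ Q : (Wmn m n).toAffine.Point, addOrderOf Q = 2 ∧
      ∀ h₀ : (Wmn m n).toAffine.Nonsingular 0 0,
        Q ≠ WeierstrassCurve.Affine.Point.some 0 0 h₀) ↔
    ∃ d : ℤ, Odd d ∧ Int.gcd (4 * m + 1) d = 1 ∧ n = -d * (4 * m + 1 + 16 * d) := by
  have hΔ : (Wmn m n).toAffine.Δ ≠ 0 := by
    have heq : (Wmn m n).toAffine.Δ = ((n ^ 2 * ((4 * m + 1) ^ 2 - 64 * n) : ℤ) : ℚ) := by
      simp only [WeierstrassCurve.Δ, WeierstrassCurve.b₂, WeierstrassCurve.b₄,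
        WeierstrassCurve.b₆, WeierstrassCurve.b₈, Wmn]
      push_cast; ring
    rw [heq]
    have hodd : Odd (n ^ 2 * ((4 * m + 1) ^ 2 - 64 * n)) :=
      Odd.mul (hn.pow) (Odd.sub_even (Odd.pow ⟨2 * m, by ring⟩) ⟨32 * n, by ring⟩)
    have : n ^ 2 * ((4 * m + 1) ^ 2 - 64 * n) ≠ 0 := by
      rcases hodd with ⟨t, ht⟩; omega
    exact_mod_cast this
  constructor
  · rintro ⟨Q, hord, hne⟩
    rcases Q with _ | @⟨x, y, h⟩
    · rw [← zero_def, addOrderOf_zero] at hord; omega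
    · have h2 : Point.some _ _ h + Point.some _ _ h = 0 := by
        have h0 := addOrderOf_nsmul_eq_zero (Point.some _ _ h)
        rwa [hord, two_nsmul] at h0
      have hy : y = (Wmn m n).toAffine.negY x y := by
        by_contra hy
        have h3 := add_self_of_Y_ne (h₁ := h) hy
        rw [h2] at h3
        exact some_ne_zero _ h3.symm
      have hy' : y = -y - x := by
        simpa [WeierstrassCurve.Affine.negY, Wmn] using hy
      have hx0 : x ≠ 0 := by
        intro h0
        have hy0 : y = 0 := by rw [h0] at hy'; linarith
        subst h0; subst hy0
        exact hne h rfl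
      have hE : y ^ 2 + x * y = x ^ 3 + (m : ℚ) * x ^ 2 + (n : ℚ) * x := by
        have := (equation_iff x y).mp h.1
        simpa [Wmn] using this
      have hquad : 4 * x ^ 2 + (4 * (m : ℚ) + 1) * x + 4 * (n : ℚ) = 0 := by
        have h4 : x * (4 * x ^ 2 + (4 * (m : ℚ) + 1) * x + 4 * (n : ℚ)) = 0 := by
          linear_combination (-4 : ℚ) * hE + (x + 2 * y) * hy'
        exact (mul_eq_zero.mp h4).resolve_left hx0
      exact nt_forward m n hn hgcd x hquad
  · rintro ⟨d, hd, hgd, hnd⟩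
    have hnQ : ((n : ℚ)) = -(d : ℚ) * (4 * m + 1 + 16 * d) := by exact_mod_cast hnd
    have hE : (Wmn m n).toAffine.Equation (4 * (d : ℚ)) (-2 * (d : ℚ)) := by
      rw [equation_iff]
      simp only [Wmn]
      linear_combination (-4 * (d : ℚ)) * hnQ
    have hns : (Wmn m n).toAffine.Nonsingular (4 * (d : ℚ)) (-2 * (d : ℚ)) :=
      (equation_iff_nonsingular_of_Δ_ne_zero hΔ).mp hE
    have hy : (-2 * (d : ℚ)) = (Wmn m n).toAffine.negY (4 * (d : ℚ)) (-2 * (d : ℚ)) := by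
      simp only [WeierstrassCurve.Affine.negY, Wmn]; ring
    have hd0 : d ≠ 0 := by rcases hd with ⟨t, ht⟩; omega
    refine ⟨Point.some _ _ hns, ?_, ?_⟩
    · have h2 : (2 : ℕ) • Point.some _ _ hns = 0 := by
        rw [two_nsmul]; exact add_self_of_Y_eq hy
      exact addOrderOf_eq_prime h2 (some_ne_zero hns)
    · intro h₀ heq
      have : (4 * (d : ℚ)) = 0 ∧ (-2 * (d : ℚ)) = 0 := by
        simpa using heq
      have : (d : ℚ) = 0 := by linarith [this.1]
      exact hd0 (by exact_mod_cast this)
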